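/- Let n ≥ 1 and D_1 ≥ 2 be integers. Let Q(ζ) = (Q_{ij}(ζ)) be an n×n matrix whose entries are polynomials in ζ, each divisible by ζ^{D_1−1}, with Q(ζ) invertible for every |ζ| = 1, and let S_{ij} ∈ ℂ[X] be arbitrary polynomials. Let G̃₂(ζ) be the 2n×2n matrix whose (2i−1,2j−1) entry is δ_{ij}, whose (2i,2j−1) entry is −i·δ_{ij}, whose (2i−1,2j) entry is Q_{ij}(ζ) + S_{ij}(conj ζ), and whose (2i,2j) entry is i·(Q_{ij}(ζ) − S_{ij}(conj ζ)) (it is invertible for |ζ| = 1 since det G̃₂ = (2i)^n det Q). Suppose there exist integers κ_1, …, κ_{2n} and a continuous map Θ from the closed unit disc to the invertible 2n×2n complex matrices, holomorphic on the open unit disc, such that −Θ(ζ) · (conj G̃₂(ζ))^{-1} · G̃₂(ζ) = Λ(ζ) · conj(Θ(ζ)) for all |ζ| = 1, where Λ(ζ) = diag(ζ^{κ_1},…,ζ^{κ_{2n}}) and conj denotes entrywise complex conjugation. Then κ_j ≥ D_1 − 1 for every j = 1,…,2n. -/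

import Mathlib

open ComplexConjugate

noncomputable section

/-- The `2n × 2n` matrix `G̃₂(ζ)`: rows/columns are indexed by pairs `(i,a)` with
`a = 0` corresponding to the odd row/column `2i−1` and `a = 1` to the even one `2i`. -/
def Gtilde2 (n : ℕ) (Q S : Fin n → Fin n → Polynomial ℂ) (ζ : ℂ) :
    Matrix (Fin n × Fin 2) (Fin n × Fin 2) ℂ :=
  Matrix.of fun p q =>
    if p.2 = 0 then
      (if q.2 = 0 then (if p.1 = q.1 then (1 : ℂ) else 0)
       else (Q p.1 q.1).eval ζ + (S p.1 q.1).eval (conj ζ))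
    else
      (if q.2 = 0 then (if p.1 = q.1 then -Complex.I else 0)
       else Complex.I * ((Q p.1 q.1).eval ζ - (S p.1 q.1).eval (conj ζ)))

/-- The auxiliary holomorphic polynomial matrix `P(ζ) = [[q, -S*],[0, I]]`. -/
private def PMa {n : ℕ} (q Sc : Fin n → Fin n → Polynomial ℂ) (ζ : ℂ) :
    Matrix (Fin n × Fin 2) (Fin n × Fin 2) ℂ :=
  Matrix.of fun r c =>
    if r.2 = 0 then (if c.2 = 0 then (q r.1 c.1).eval ζ else -((Sc r.1 c.1).eval ζ))
    else (if c.2 = 0 then 0 else if r.1 = c.1 then (1 : ℂ) else 0)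

/-- The auxiliary holomorphic polynomial matrix `L(ζ) = [[S*, -q],[-I, 0]]`. -/
private def LMa {n : ℕ} (q Sc : Fin n → Fin n → Polynomial ℂ) (ζ : ℂ) :
    Matrix (Fin n × Fin 2) (Fin n × Fin 2) ℂ :=
  Matrix.of fun r c =>
    if r.2 = 0 then (if c.2 = 0 then (Sc r.1 c.1).eval ζ else -((q r.1 c.1).eval ζ))
    else (if c.2 = 0 then (if r.1 = c.1 then (-1 : ℂ) else 0) else 0)

private lemma conj_poly_eval (P : Polynomial ℂ) (z : ℂ) :
    (starRingEnd ℂ) (P.eval z) = (P.map (starRingEnd ℂ)).eval ((starRingEnd ℂ) z) := by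
  rw [Polynomial.eval_map, Polynomial.eval₂_hom]

/-- Key algebraic identity on the unit circle:
`G̃₂(ζ) ⬝ conj(P(ζ)) = -ζ^m conj(G̃₂(ζ)) ⬝ L(ζ)`. -/
private lemma star_identity {n : ℕ} (m : ℕ) (Q S q : Fin n → Fin n → Polynomial ℂ)
    (hq : ∀ i j, Q i j = Polynomial.X ^ m * q i j) {ζ : ℂ}
    (hζζ : ζ * (starRingEnd ℂ) ζ = 1) :
    Gtilde2 n Q S ζ * (PMa q (fun i j => (S i j).map (starRingEnd ℂ)) ζ).map (starRingEnd ℂ) =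
      (-(ζ ^ m)) • ((Gtilde2 n Q S ζ).map (starRingEnd ℂ) *
        LMa q (fun i j => (S i j).map (starRingEnd ℂ)) ζ) := by
  have hpow : ζ ^ m * ((starRingEnd ℂ) ζ) ^ m = 1 := by rw [← mul_pow, hζζ, one_pow]
  have hS : ∀ i j : Fin n, ((S i j).map (starRingEnd ℂ)).eval ζ
      = (starRingEnd ℂ) ((S i j).eval ((starRingEnd ℂ) ζ)) := by
    intro i j; rw [conj_poly_eval, Complex.conj_conj]
  ext ⟨i, a⟩ ⟨j, c⟩
  fin_cases a <;> fin_cases c <;>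
    simp only [Gtilde2, PMa, LMa, Matrix.mul_apply, Matrix.map_apply, Matrix.smul_apply,
      Matrix.of_apply, Fintype.sum_prod_type, Fin.sum_univ_two, hq, hS,
      Polynomial.eval_mul, Polynomial.eval_pow, Polynomial.eval_X,
      apply_ite (starRingEnd ℂ),
      map_add, map_mul, map_pow, map_neg, map_sub, map_one, map_zero, Complex.conj_I,
      Complex.conj_conj, smul_eq_mul, Fin.mk_zero, Fin.mk_one, Fin.reduceEq,
      if_true, if_false, ite_mul, mul_ite, zero_mul, mul_zero,
      one_mul, mul_one, neg_mul, mul_neg, neg_neg, Finset.sum_ite_eq, Finset.sum_ite_eq',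
      Finset.mem_univ, Finset.sum_const_zero, Finset.sum_add_distrib, Finset.sum_neg_distrib, add_zero, zero_add]
  · linear_combination (-(starRingEnd ℂ) ((q i j).eval ζ)) * hpow
  · ring
  · linear_combination (Complex.I * (starRingEnd ℂ) ((q i j).eval ζ)) * hpow
  · ring

private lemma PMa_cont {n : ℕ} (q Sc : Fin n → Fin n → Polynomial ℂ) (s r : Fin n × Fin 2) :
    Continuous fun ζ : ℂ => PMa q Sc ζ s r := by
  obtain ⟨l, e⟩ := s; obtain ⟨j, c⟩ := r
  simp only [PMa, Matrix.of_apply]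
  split_ifs <;>
    first
      | exact Polynomial.continuous _
      | exact (Polynomial.continuous _).neg
      | exact continuous_const

private lemma PMa_diff {n : ℕ} (q Sc : Fin n → Fin n → Polynomial ℂ) (s r : Fin n × Fin 2) :
    Differentiable ℂ fun ζ : ℂ => PMa q Sc ζ s r := by
  obtain ⟨l, e⟩ := s; obtain ⟨j, c⟩ := r
  simp only [PMa, Matrix.of_apply]
  split_ifs <;>
    first
      | exact Polynomial.differentiable _
      | exact (Polynomial.differentiable _).neg
      | exact differentiable_const _

private lemma LMa_cont {n : ℕ} (q Sc : Fin n → Fin n → Polynomial ℂ) (s r : Fin n × Fin 2) :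
    Continuous fun ζ : ℂ => LMa q Sc ζ s r := by
  obtain ⟨l, e⟩ := s; obtain ⟨j, c⟩ := r
  simp only [LMa, Matrix.of_apply]
  split_ifs <;>
    first
      | exact Polynomial.continuous _
      | exact (Polynomial.continuous _).neg
      | exact continuous_const

private lemma LMa_diff {n : ℕ} (q Sc : Fin n → Fin n → Polynomial ℂ) (s r : Fin n × Fin 2) :
    Differentiable ℂ fun ζ : ℂ => LMa q Sc ζ s r := by
  obtain ⟨l, e⟩ := s; obtain ⟨j, c⟩ := r
  simp only [LMa, Matrix.of_apply]
  split_ifs <;>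
    first
      | exact Polynomial.differentiable _
      | exact (Polynomial.differentiable _).neg
      | exact differentiable_const _

theorem stmt13
    (n D1 : ℕ) (hn : 1 ≤ n) (hD1 : 2 ≤ D1)
    (Q S : Fin n → Fin n → Polynomial ℂ)
    (hQdvd : ∀ i j, (Polynomial.X : Polynomial ℂ) ^ (D1 - 1) ∣ Q i j)
    (hQinv : ∀ ζ : ℂ, ‖ζ‖ = 1 → IsUnit (Matrix.of fun i j => (Q i j).eval ζ))
    (κ : Fin n × Fin 2 → ℤ)
    (Θ : ℂ → Matrix (Fin n × Fin 2) (Fin n × Fin 2) ℂ)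
    (hΘcont : ∀ p q, ContinuousOn (fun ζ => Θ ζ p q) (Metric.closedBall 0 1))
    (hΘdiff : ∀ p q, DifferentiableOn ℂ (fun ζ => Θ ζ p q) (Metric.ball 0 1))
    (hΘinv : ∀ ζ ∈ Metric.closedBall (0 : ℂ) 1, IsUnit (Θ ζ))
    (hfact : ∀ ζ : ℂ, ‖ζ‖ = 1 →
      -(Θ ζ * ((Gtilde2 n Q S ζ).map (starRingEnd ℂ))⁻¹ * Gtilde2 n Q S ζ) =
        Matrix.diagonal (fun p => ζ ^ κ p) * (Θ ζ).map (starRingEnd ℂ)) :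
    ∀ p, (D1 : ℤ) - 1 ≤ κ p := by
  intro p
  by_contra hκlt
  push_neg at hκlt
  set m : ℕ := D1 - 1 with hm
  choose q hq using hQdvd
  set Sc : Fin n → Fin n → Polynomial ℂ := fun i j => (S i j).map (starRingEnd ℂ) with hScdef
  set kk : ℕ := ((D1 : ℤ) - 1 - κ p).toNat with hkkdef
  have hkkZ : (kk : ℤ) = (D1 : ℤ) - 1 - κ p := Int.toNat_of_nonneg (by omega)
  have hkk1 : kk ≠ 0 := by omega
  -- the two holomorphic "row" functions
  -- relation on the circle: conj (B ζ r) = ζ^kk * A ζ r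
  have hdiamond : ∀ ζ : ℂ, ‖ζ‖ = 1 → ∀ r,
      (starRingEnd ℂ) ((Θ ζ * PMa q Sc ζ) p r) = ζ ^ kk * ((Θ ζ * LMa q Sc ζ) p r) := by
    intro ζ hζ r
    have hζ0 : ζ ≠ 0 := by intro h; rw [h] at hζ; simp at hζ
    have hζζ : ζ * (starRingEnd ℂ) ζ = 1 := by
      rw [Complex.mul_conj, Complex.normSq_eq_norm_sq, hζ]
      norm_num
    have hmem : ζ ∈ Metric.closedBall (0 : ℂ) 1 := by
      simp [Metric.mem_closedBall, dist_zero_right, hζ]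
    have hGc : IsUnit ((Gtilde2 n Q S ζ).map (starRingEnd ℂ)).det := by
      by_contra hG
      have h0 : ((Gtilde2 n Q S ζ).map (starRingEnd ℂ))⁻¹ = 0 :=
        Matrix.nonsing_inv_apply_not_isUnit _ hG
      have h1 := hfact ζ hζ
      rw [h0, Matrix.mul_zero, Matrix.zero_mul, neg_zero] at h1
      have hdet := congrArg Matrix.det h1
      haveI : Nonempty (Fin n × Fin 2) := ⟨(⟨0, by omega⟩, 0)⟩
      rw [Matrix.det_zero, Matrix.det_mul, Matrix.det_diagonal] at hdet
      have hTu := hΘinv ζ hmem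
      rw [Matrix.isUnit_iff_isUnit_det] at hTu
      have hTd : (Θ ζ).det ≠ 0 := hTu.ne_zero
      have hTcd : ((Θ ζ).map (starRingEnd ℂ)).det ≠ 0 := by
        rw [← RingHom.mapMatrix_apply, ← RingHom.map_det]
        exact fun h => hTd (by simpa using congrArg (starRingEnd ℂ) h)
      exact (mul_ne_zero
        (Finset.prod_ne_zero_iff.2 fun _ _ => zpow_ne_zero _ hζ0) hTcd) hdet.symm
    have hinvmul : ((Gtilde2 n Q S ζ).map (starRingEnd ℂ))⁻¹ *
        ((Gtilde2 n Q S ζ).map (starRingEnd ℂ)) = 1 := Matrix.nonsing_inv_mul _ hGc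
    have h1 := hfact ζ hζ
    have hstar' := star_identity m Q S q hq hζζ
    have hmain : Matrix.diagonal (fun s => ζ ^ κ s) * ((Θ ζ * PMa q Sc ζ).map (starRingEnd ℂ))
        = (ζ ^ m) • (Θ ζ * LMa q Sc ζ) := by
      calc Matrix.diagonal (fun s => ζ ^ κ s) * ((Θ ζ * PMa q Sc ζ).map (starRingEnd ℂ))
          = (Matrix.diagonal (fun s => ζ ^ κ s) * (Θ ζ).map (starRingEnd ℂ)) *
              (PMa q Sc ζ).map (starRingEnd ℂ) := by
            rw [Matrix.map_mul, Matrix.mul_assoc]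
        _ = -(Θ ζ * ((Gtilde2 n Q S ζ).map (starRingEnd ℂ))⁻¹ * Gtilde2 n Q S ζ) *
              (PMa q Sc ζ).map (starRingEnd ℂ) := by rw [h1]
        _ = -(Θ ζ * ((Gtilde2 n Q S ζ).map (starRingEnd ℂ))⁻¹ *
              (Gtilde2 n Q S ζ * (PMa q Sc ζ).map (starRingEnd ℂ))) := by
            rw [neg_mul, Matrix.mul_assoc]
        _ = -(Θ ζ * ((Gtilde2 n Q S ζ).map (starRingEnd ℂ))⁻¹ *
              ((-(ζ ^ m)) • ((Gtilde2 n Q S ζ).map (starRingEnd ℂ) * LMa q Sc ζ))) := by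
            rw [hstar']
        _ = (ζ ^ m) • (Θ ζ * ((Gtilde2 n Q S ζ).map (starRingEnd ℂ))⁻¹ *
              ((Gtilde2 n Q S ζ).map (starRingEnd ℂ) * LMa q Sc ζ)) := by
            rw [Matrix.mul_smul, neg_smul, neg_neg]
        _ = (ζ ^ m) • (Θ ζ * LMa q Sc ζ) := by
            rw [Matrix.mul_assoc (Θ ζ), ← Matrix.mul_assoc _ _ (LMa q Sc ζ), hinvmul,
              Matrix.one_mul]
    have hent := Matrix.ext_iff.2 hmain p r
    rw [Matrix.diagonal_mul, Matrix.map_apply, Matrix.smul_apply, smul_eq_mul] at hent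
    have hsplit : (ζ : ℂ) ^ (m : ℕ) = ζ ^ κ p * ζ ^ (kk : ℕ) := by
      rw [← zpow_natCast ζ m, ← zpow_natCast ζ kk, ← zpow_add₀ hζ0]
      congr 1
      omega
    rw [hsplit, mul_assoc] at hent
    exact mul_left_cancel₀ (zpow_ne_zero _ hζ0) hent
  -- the scalar holomorphic function φ
  set φ : ℂ → ℂ := fun ζ => ζ ^ kk *
    ∑ r : Fin n × Fin 2, (Θ ζ * LMa q Sc ζ) p r * (Θ ζ * PMa q Sc ζ) p r with hφdef
  have hAc : ∀ r, ContinuousOn (fun ζ => (Θ ζ * LMa q Sc ζ) p r) (Metric.closedBall 0 1) := by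
    intro r
    have : (fun ζ => (Θ ζ * LMa q Sc ζ) p r)
        = fun ζ => ∑ s : Fin n × Fin 2, Θ ζ p s * LMa q Sc ζ s r := by
      funext ζ; rw [Matrix.mul_apply]
    rw [this]
    exact continuousOn_finset_sum _ fun s _ => (hΘcont p s).mul (LMa_cont q Sc s r).continuousOn
  have hBc : ∀ r, ContinuousOn (fun ζ => (Θ ζ * PMa q Sc ζ) p r) (Metric.closedBall 0 1) := by
    intro r
    have : (fun ζ => (Θ ζ * PMa q Sc ζ) p r)
        = fun ζ => ∑ s : Fin n × Fin 2, Θ ζ p s * PMa q Sc ζ s r := by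
      funext ζ; rw [Matrix.mul_apply]
    rw [this]
    exact continuousOn_finset_sum _ fun s _ => (hΘcont p s).mul (PMa_cont q Sc s r).continuousOn
  have hAd : ∀ r, DifferentiableOn ℂ (fun ζ => (Θ ζ * LMa q Sc ζ) p r) (Metric.ball 0 1) := by
    intro r
    have : (fun ζ => (Θ ζ * LMa q Sc ζ) p r)
        = fun ζ => ∑ s : Fin n × Fin 2, Θ ζ p s * LMa q Sc ζ s r := by
      funext ζ; rw [Matrix.mul_apply]
    rw [this]
    exact DifferentiableOn.fun_sum fun s _ => (hΘdiff p s).mul (LMa_diff q Sc s r).differentiableOn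
  have hBd : ∀ r, DifferentiableOn ℂ (fun ζ => (Θ ζ * PMa q Sc ζ) p r) (Metric.ball 0 1) := by
    intro r
    have : (fun ζ => (Θ ζ * PMa q Sc ζ) p r)
        = fun ζ => ∑ s : Fin n × Fin 2, Θ ζ p s * PMa q Sc ζ s r := by
      funext ζ; rw [Matrix.mul_apply]
    rw [this]
    exact DifferentiableOn.fun_sum fun s _ => (hΘdiff p s).mul (PMa_diff q Sc s r).differentiableOn
  have hφdc : DiffContOnCl ℂ φ (Metric.ball (0 : ℂ) 1) := by
    constructor
    · exact ((differentiable_pow kk).differentiableOn).mul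
        (DifferentiableOn.fun_sum fun r _ => (hAd r).mul (hBd r))
    · rw [closure_ball (0 : ℂ) one_ne_zero]
      exact ((continuous_pow kk).continuousOn).mul
        (continuousOn_finset_sum _ fun r _ => (hAc r).mul (hBc r))
  have hφ0 : φ 0 = 0 := by rw [hφdef]; simp [zero_pow hkk1]
  have hcauchy := hφdc.circleIntegral_sub_inv_smul (Metric.mem_ball_self one_pos)
  rw [hφ0, smul_zero] at hcauchy
  -- turn the circle integral into an interval integral
  have h5 : (∫ θ in (0:ℝ)..(2 * Real.pi), Complex.I * φ (circleMap 0 1 θ)) = 0 := by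
    have e : (∮ z in C(0, 1), (z - 0)⁻¹ • φ z)
        = ∫ θ in (0:ℝ)..(2 * Real.pi), Complex.I * φ (circleMap 0 1 θ) := by
      rw [circleIntegral]
      refine intervalIntegral.integral_congr fun θ _ => ?_
      have hz : circleMap 0 1 θ ≠ 0 := circleMap_ne_center one_ne_zero
      simp only [deriv_circleMap, smul_eq_mul, sub_zero]
      field_simp
    rw [← e, hcauchy]
  -- the boundary values of φ are the nonneg reals ∑ |B|²
  set g : ℝ → ℝ := fun θ =>
    ∑ r : Fin n × Fin 2, Complex.normSq ((Θ (circleMap 0 1 θ) * PMa q Sc (circleMap 0 1 θ)) p r)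
    with hgdef
  have hcm : ∀ θ : ℝ, ‖circleMap 0 1 θ‖ = 1 := by
    intro θ; rw [norm_circleMap_zero]; norm_num
  have hφg : ∀ θ : ℝ, φ (circleMap 0 1 θ) = ((g θ : ℝ) : ℂ) := by
    intro θ
    rw [hφdef, hgdef]
    push_cast
    rw [Finset.mul_sum]
    refine Finset.sum_congr rfl fun r _ => ?_
    have hd := hdiamond (circleMap 0 1 θ) (hcm θ) r
    rw [← mul_assoc]
    calc circleMap 0 1 θ ^ kk * (Θ (circleMap 0 1 θ) * LMa q Sc (circleMap 0 1 θ)) p r *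
          (Θ (circleMap 0 1 θ) * PMa q Sc (circleMap 0 1 θ)) p r
        = (starRingEnd ℂ) ((Θ (circleMap 0 1 θ) * PMa q Sc (circleMap 0 1 θ)) p r) *
          (Θ (circleMap 0 1 θ) * PMa q Sc (circleMap 0 1 θ)) p r := by rw [hd]
      _ = _ := by rw [mul_comm, Complex.mul_conj]
  have hgcont : Continuous g := by
    rw [hgdef]
    refine continuous_finset_sum _ fun r _ => Complex.continuous_normSq.comp ?_
    exact (hBc r).comp_continuous (continuous_circleMap 0 1) fun θ => by
      simp [Metric.mem_closedBall, dist_zero_right, hcm θ]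
  have hgint : (∫ θ in (0:ℝ)..(2 * Real.pi), g θ) = 0 := by
    have : (∫ θ in (0:ℝ)..(2 * Real.pi), Complex.I * φ (circleMap 0 1 θ))
        = Complex.I * ((∫ θ in (0:ℝ)..(2 * Real.pi), g θ : ℝ) : ℂ) := by
      rw [intervalIntegral.integral_const_mul]
      congr 1
      rw [← intervalIntegral.integral_ofReal]
      exact intervalIntegral.integral_congr fun θ _ => hφg θ
    rw [this] at h5
    have := (mul_eq_zero.1 h5).resolve_left Complex.I_ne_zero
    exact_mod_cast this
  -- find a boundary point where the row vanishes
  have hzero : ∃ θ : ℝ, g θ = 0 := by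
    by_contra hno
    push_neg at hno
    have hpos : ∀ θ : ℝ, 0 < g θ := fun θ =>
      lt_of_le_of_ne (Finset.sum_nonneg fun r _ => Complex.normSq_nonneg _) (Ne.symm (hno θ))
    have := intervalIntegral.intervalIntegral_pos_of_pos_on
      (hgcont.intervalIntegrable 0 (2 * Real.pi)) (fun x _ => hpos x)
      (by positivity)
    rw [hgint] at this
    exact lt_irrefl 0 this
  obtain ⟨θ₀, hθ₀⟩ := hzero
  set ζ₁ : ℂ := circleMap 0 1 θ₀ with hζ₁def
  have hζ₁ : ‖ζ₁‖ = 1 := hcm θ₀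
  have hB0 : ∀ r, (Θ ζ₁ * PMa q Sc ζ₁) p r = 0 := by
    intro r
    have hr := (Finset.sum_eq_zero_iff_of_nonneg
      (fun i _ => Complex.normSq_nonneg _)).1 hθ₀ r (Finset.mem_univ r)
    exact Complex.normSq_eq_zero.1 hr
  -- the q-matrix at ζ₁ is invertible
  have hQU := hQinv ζ₁ hζ₁
  rw [Matrix.isUnit_iff_isUnit_det] at hQU
  have heq : (Matrix.of fun i j => (Q i j).eval ζ₁ : Matrix (Fin n) (Fin n) ℂ)
      = (ζ₁ ^ m) • (Matrix.of fun l j => (q l j).eval ζ₁) := by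
    ext i j
    simp [hq, Polynomial.eval_mul, Polynomial.eval_pow, Polynomial.eval_X, smul_eq_mul]
  rw [heq, Matrix.det_smul] at hQU
  have hqmat : IsUnit (Matrix.of fun l j => (q l j).eval ζ₁ : Matrix (Fin n) (Fin n) ℂ).det :=
    isUnit_of_mul_isUnit_right hQU
  -- first the (·,0) entries of the row of Θ vanish
  have hxq : ∀ j : Fin n, (∑ l, Θ ζ₁ p (l, 0) * (q l j).eval ζ₁) = 0 := by
    intro j
    have h := hB0 (j, 0)
    rw [Matrix.mul_apply] at h
    simpa [PMa, Fintype.sum_prod_type, Fin.sum_univ_two] using h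
  have hx : ∀ l, Θ ζ₁ p (l, 0) = 0 := by
    have hv : Matrix.vecMul (fun l => Θ ζ₁ p (l, 0))
        (Matrix.of fun l j => (q l j).eval ζ₁) = 0 := by
      funext j
      simpa [Matrix.vecMul, dotProduct] using hxq j
    intro l
    have h2 := congrArg
      (fun v => Matrix.vecMul v (Matrix.of fun l j => (q l j).eval ζ₁)⁻¹) hv
    simp only [Matrix.vecMul_vecMul, Matrix.mul_nonsing_inv _ hqmat, Matrix.vecMul_one,
      Matrix.zero_vecMul] at h2
    exact congrFun h2 l
  -- then the (·,1) entries vanish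
  have hrow : ∀ s : Fin n × Fin 2, Θ ζ₁ p s = 0 := by
    rintro ⟨l, e⟩
    fin_cases e
    · exact hx l
    · have h := hB0 (l, 1)
      rw [Matrix.mul_apply] at h
      simpa [PMa, Fintype.sum_prod_type, Fin.sum_univ_two, hx] using h
  have hdet0 : (Θ ζ₁).det = 0 := Matrix.det_eq_zero_of_row_eq_zero p hrow
  have hTu := hΘinv ζ₁ (by simp [Metric.mem_closedBall, dist_zero_right, hζ₁])
  rw [Matrix.isUnit_iff_isUnit_det, hdet0] at hTu
  exact hTu.ne_zero rfl
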